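/- For every integer K ≥ 1, the Flaschka–Newell bracket of s_{2K+2} with the matrix F = F_K satisfies, entrywise, {s_{2K+2}, F}_{FN} = (s_{2K+2}/2)[F, σ3] + λ^{−2}[σ+, F], where [X, Y] = XY − YX denotes the commutator. -/

import Mathlib

noncomputable section

open Matrix Finset

/-- Partial derivative with respect to the Stokes coordinate `s_j`
(0-based index `j`, corresponding to the paper's `s_{j+1}`) of a function
of `(s, λ) ∈ ℂ^{2K+2} × ℂ`. -/
def pS (K : ℕ) (j : Fin (2*K+2)) (f : (Fin (2*K+2) → ℂ) → ℂ → ℂ)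
    (s : Fin (2*K+2) → ℂ) (lam : ℂ) : ℂ :=
  fderiv ℂ (fun t => f t lam) s (Pi.single j 1)

/-- Partial derivative with respect to `λ`. -/
def pL (K : ℕ) (f : (Fin (2*K+2) → ℂ) → ℂ → ℂ)
    (s : Fin (2*K+2) → ℂ) (lam : ℂ) : ℂ :=
  deriv (f s) lam

/-- The structure constant `{s_{j+1}, s_{l+1}}_{FN}` (0-based indices `j < l`):
`δ_{j+1,l} − δ_{j,0} δ_{l,2K+1} λ^{−2} + (−1)^{j+l+1} s_j s_l`
(which is the paper's `δ_{j,l−1} − δ_{j,1}δ_{l,2K+2} λ^{−2} + (−1)^{j−l+1} s_j s_l`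
in 1-based indexing). -/
def cSS (K : ℕ) (j l : Fin (2*K+2)) (s : Fin (2*K+2) → ℂ) (lam : ℂ) : ℂ :=
  (if (j:ℕ)+1 = (l:ℕ) then 1 else 0)
  - (if (j:ℕ) = 0 ∧ (l:ℕ) = 2*K+1 then (lam^2)⁻¹ else 0)
  + (-1:ℂ)^((j:ℕ)+(l:ℕ)+1) * s j * s l

/-- The structure constant `{s_{j+1}, λ}_{FN} = (−1)^{j+1} s_{j+1} λ` (0-based `j`). -/
def cSL (K : ℕ) (j : Fin (2*K+2)) (s : Fin (2*K+2) → ℂ) (lam : ℂ) : ℂ :=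
  (-1:ℂ)^((j:ℕ)+1) * s j * lam

/-- The Flaschka–Newell bracket of two functions of `(s, λ)`:
`{f,g} = Σ_{j<l} {s_j,s_l}·(∂_j f ∂_l g − ∂_l f ∂_j g) + Σ_j {s_j,λ}·(∂_j f ∂_λ g − ∂_λ f ∂_j g)`. -/
def fnBr (K : ℕ) (f g : (Fin (2*K+2) → ℂ) → ℂ → ℂ)
    (s : Fin (2*K+2) → ℂ) (lam : ℂ) : ℂ :=
  (∑ j : Fin (2*K+2), ∑ l : Fin (2*K+2),
    if (j:ℕ) < (l:ℕ) then
      cSS K j l s lam *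
        (pS K j f s lam * pS K l g s lam - pS K l f s lam * pS K j g s lam)
    else 0)
  + ∑ j : Fin (2*K+2),
      cSL K j s lam * (pS K j f s lam * pL K g s lam - pL K f s lam * pS K j g s lam)

/-- Upper-triangular unipotent 2×2 matrix `[[1, a], [0, 1]]`. -/
def Umat (a : ℂ) : Matrix (Fin 2) (Fin 2) ℂ := !![1, a; 0, 1]

/-- Lower-triangular unipotent 2×2 matrix `[[1, 0], [a, 1]]`. -/
def Lmat (a : ℂ) : Matrix (Fin 2) (Fin 2) ℂ := !![1, 0; a, 1]

/-- The Pauli matrix `σ3`. -/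
def sigma3 : Matrix (Fin 2) (Fin 2) ℂ := !![1, 0; 0, -1]

/-- The matrix `σ₊`. -/
def sigmaP : Matrix (Fin 2) (Fin 2) ℂ := !![0, 1; 0, 0]

/-- The matrix `σ₋`. -/
def sigmaM : Matrix (Fin 2) (Fin 2) ℂ := !![0, 0; 1, 0]

/-- The matrix `F = F_K(s, λ) = [[1,s_1],[0,1]]·[[1,0],[s_2,1]] ⋯
[[1,s_{2K+1}],[0,1]]·[[1,0],[s_{2K+2},1]]·diag(λ, λ⁻¹)`
(here `s` is 0-based: `s i` is the paper's `s_{i+1}`). -/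
def Fmat (K : ℕ) (s : Fin (2*K+2) → ℂ) (lam : ℂ) : Matrix (Fin 2) (Fin 2) ℂ :=
  ((List.ofFn fun i : Fin (K+1) =>
      Umat (s ⟨2*(i:ℕ), by have := i.isLt; omega⟩) *
      Lmat (s ⟨2*(i:ℕ)+1, by have := i.isLt; omega⟩)).prod)
    * !![lam, 0; 0, lam⁻¹]

-- ===== auxiliary development =====

attribute [local instance] Matrix.linftyOpNormedRing Matrix.linftyOpNormedAlgebra

abbrev EE := Matrix (Fin 2) (Fin 2) ℂ
def Dm (lam : ℂ) : EE := !![lam, 0; 0, lam⁻¹]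

-- 2x2 algebra lemmas
lemma Umat_eq (a : ℂ) : Umat a = a • sigmaP + 1 := by
  ext i j; fin_cases i <;> fin_cases j <;> simp [Umat, sigmaP, Matrix.one_apply]

lemma Lmat_eq (a : ℂ) : Lmat a = a • sigmaM + 1 := by
  ext i j; fin_cases i <;> fin_cases j <;> simp [Lmat, sigmaM, Matrix.one_apply]

lemma sigmaP_mul_Umat (a : ℂ) : sigmaP * Umat a = sigmaP := by
  ext i j; fin_cases i <;> fin_cases j <;>
    simp [Umat, sigmaP, Matrix.mul_apply, Fin.sum_univ_two]

lemma key2 (a b : ℂ) :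
    sigma3 * (Umat b * Lmat a) - (Umat b * Lmat a) * sigma3
      = (2*b) • (sigmaP * Lmat a) - (2*a) • (Umat b * sigmaM) := by
  ext i j; fin_cases i <;> fin_cases j <;>
    simp [Umat, Lmat, sigma3, sigmaP, sigmaM, Matrix.mul_apply, Fin.sum_univ_two] <;> ring

-- derivative of the U factor
variable {K : ℕ}

lemma hasFDerivAt_U (j : Fin (2*K+2)) (t : Fin (2*K+2) → ℂ) :
    HasFDerivAt (fun t : Fin (2*K+2) → ℂ => Umat (t j))
      ((ContinuousLinearMap.proj j : (Fin (2*K+2) → ℂ) →L[ℂ] ℂ).smulRight sigmaP) t := by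
  have h : (fun t : Fin (2*K+2) → ℂ => Umat (t j))
      = fun t : Fin (2*K+2) → ℂ =>
        ((ContinuousLinearMap.proj j : (Fin (2*K+2) → ℂ) →L[ℂ] ℂ).smulRight sigmaP) t + 1 := by
    funext t; simp [Umat_eq]
  rw [h]
  exact (ContinuousLinearMap.hasFDerivAt _).add_const 1

lemma hasFDerivAt_L (j : Fin (2*K+2)) (t : Fin (2*K+2) → ℂ) :
    HasFDerivAt (fun t : Fin (2*K+2) → ℂ => Lmat (t j))
      ((ContinuousLinearMap.proj j : (Fin (2*K+2) → ℂ) →L[ℂ] ℂ).smulRight sigmaM) t := by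
  have h : (fun t : Fin (2*K+2) → ℂ => Lmat (t j))
      = fun t : Fin (2*K+2) → ℂ =>
        ((ContinuousLinearMap.proj j : (Fin (2*K+2) → ℂ) →L[ℂ] ℂ).smulRight sigmaM) t + 1 := by
    funext t; simp [Lmat_eq]
  rw [h]
  exact (ContinuousLinearMap.hasFDerivAt _).add_const 1

def idx (K m : ℕ) : Fin (2*K+2) := ⟨m % (2*K+2), Nat.mod_lt _ (by omega)⟩

lemma idx_val {K m : ℕ} (h : m < 2*K+2) : ((idx K m : Fin (2*K+2)) : ℕ) = m := by
  simp [idx, Nat.mod_eq_of_lt h]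

def ULf (K n : ℕ) (t : Fin (2*K+2) → ℂ) : EE :=
  Umat (t (idx K (2*n))) * Lmat (t (idx K (2*n+1)))

def Mn (K : ℕ) : ℕ → (Fin (2*K+2) → ℂ) → EE
  | 0, _ => 1
  | n+1, t => Mn K n t * ULf K n t

lemma hasFDerivAt_ULf (n : ℕ) (t : Fin (2*K+2) → ℂ) :
    HasFDerivAt (ULf K n)
      (Umat (t (idx K (2*n))) •
          ((ContinuousLinearMap.proj (idx K (2*n+1)) :
              (Fin (2*K+2) → ℂ) →L[ℂ] ℂ).smulRight sigmaM)
        + ((ContinuousLinearMap.proj (idx K (2*n)) :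
              (Fin (2*K+2) → ℂ) →L[ℂ] ℂ).smulRight sigmaP).smulRight
            (Lmat (t (idx K (2*n+1))))) t :=
  (hasFDerivAt_U _ t).mul' (hasFDerivAt_L _ t)

lemma diff_ULf (n : ℕ) : Differentiable ℂ (ULf K n) :=
  fun t => (hasFDerivAt_ULf n t).differentiableAt

lemma diff_Mn (n : ℕ) : Differentiable ℂ (Mn K n) := by
  induction n with
  | zero => exact differentiable_const _
  | succ n ih => exact fun t => (ih t).mul (diff_ULf n t)

def Dj (K n : ℕ) (j : Fin (2*K+2)) (t : Fin (2*K+2) → ℂ) : EE :=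
  fderiv ℂ (Mn K n) t (Pi.single j 1)

lemma Dj_zero' (j : Fin (2*K+2)) (t : Fin (2*K+2) → ℂ) : Dj K 0 j t = 0 := by
  have : Mn K 0 = fun _ : Fin (2*K+2) → ℂ => (1 : EE) := rfl
  simp [Dj, this, fderiv_const]

lemma Dj_succ (n : ℕ) (j : Fin (2*K+2)) (t : Fin (2*K+2) → ℂ) :
    Dj K (n+1) j t
      = Dj K n j t * ULf K n t
        + Mn K n t *
          (((Pi.single j 1 : Fin (2*K+2) → ℂ) (idx K (2*n))) • (sigmaP * Lmat (t (idx K (2*n+1))))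
            + ((Pi.single j 1 : Fin (2*K+2) → ℂ) (idx K (2*n+1))) • (Umat (t (idx K (2*n))) * sigmaM)) := by
  have hM : HasFDerivAt (Mn K n) (fderiv ℂ (Mn K n) t) t :=
    (diff_Mn n t).hasFDerivAt
  have h := (hM.mul' (hasFDerivAt_ULf n t)).fderiv
  have heq : Mn K (n+1) = fun t => Mn K n t * ULf K n t := rfl
  rw [Dj, heq]
  erw [h]
  change Mn K n t * (Umat (t (idx K (2*n))) * ((Pi.single j 1 : Fin (2*K+2) → ℂ) (idx K (2*n+1)) • sigmaM)
    + ((Pi.single j 1 : Fin (2*K+2) → ℂ) (idx K (2*n)) • sigmaP) * Lmat (t (idx K (2*n+1))))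
    + fderiv ℂ (Mn K n) t (Pi.single j 1) * ULf K n t = _
  simp only [mul_smul_comm, smul_mul_assoc, Dj]
  rw [add_comm]
  congr 1
  rw [add_comm]

lemma Dj_vanish (n : ℕ) (j : Fin (2*K+2)) (h : 2*n ≤ (j:ℕ)) (t : Fin (2*K+2) → ℂ) :
    Dj K n j t = 0 := by
  induction n with
  | zero => exact Dj_zero' j t
  | succ n ih =>
    have hj := j.isLt
    rw [Dj_succ]
    have h1 : idx K (2*n) ≠ j := by
      intro he
      have := idx_val (K := K) (m := 2*n) (by omega)
      rw [he] at this; omega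
    have h2 : idx K (2*n+1) ≠ j := by
      intro he
      have := idx_val (K := K) (m := 2*n+1) (by omega)
      rw [he] at this; omega
    rw [ih (by omega), Pi.single_eq_of_ne h1, Pi.single_eq_of_ne h2]
    simp

lemma Dj_zeroCoord (n : ℕ) (h1 : 1 ≤ n) (h2 : n ≤ K+1) (t : Fin (2*K+2) → ℂ) :
    Dj K n ⟨0, by omega⟩ t = sigmaP * Mn K n t := by
  induction n with
  | zero => omega
  | succ n ih =>
    rw [Dj_succ]
    rcases Nat.eq_zero_or_pos n with hn | hn
    · subst hn
      have e0 : idx K 0 = (⟨0, by omega⟩ : Fin (2*K+2)) := by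
        apply Fin.ext; simpa using idx_val (K := K) (m := 0) (by omega)
      have e1 : idx K 1 ≠ (⟨0, by omega⟩ : Fin (2*K+2)) := by
        intro he
        have := idx_val (K := K) (m := 1) (by omega)
        rw [he] at this; simp at this
      rw [Dj_zero']
      simp only [Nat.mul_zero, Pi.single_eq_of_ne e1]
      rw [show Mn K 0 t = 1 from rfl, e0, Pi.single_eq_same, one_smul, one_mul]
      rw [show Mn K 1 t = 1 * ULf K 0 t from rfl, ULf]
      simp only [Nat.mul_zero, zero_smul, add_zero, one_mul]
      simp [← mul_assoc, sigmaP_mul_Umat]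
    · have hne0 : idx K (2*n) ≠ (⟨0, by omega⟩ : Fin (2*K+2)) := by
        intro he
        have := idx_val (K := K) (m := 2*n) (by omega)
        rw [he] at this; simp at this; omega
      have hne1 : idx K (2*n+1) ≠ (⟨0, by omega⟩ : Fin (2*K+2)) := by
        intro he
        have := idx_val (K := K) (m := 2*n+1) (by omega)
        rw [he] at this; simp at this
      rw [ih hn (by omega), Pi.single_eq_of_ne hne0, Pi.single_eq_of_ne hne1]
      have hM : Mn K (n+1) t = Mn K n t * ULf K n t := rfl
      simp [hM, mul_assoc]

lemma Mn_succ (n : ℕ) (t : Fin (2*K+2) → ℂ) : Mn K (n+1) t = Mn K n t * ULf K n t := rfl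

lemma Dj_2K (hK : 1 ≤ K) (t : Fin (2*K+2) → ℂ) :
    Dj K (K+1) ⟨2*K, by omega⟩ t
      = Mn K K t * (sigmaP * Lmat (t ⟨2*K+1, Nat.lt_succ_self _⟩)) := by
  have e0 : idx K (2*K) = (⟨2*K, by omega⟩ : Fin (2*K+2)) := by
    apply Fin.ext; simpa using idx_val (K := K) (m := 2*K) (by omega)
  have e1 : idx K (2*K+1) = (⟨2*K+1, by omega⟩ : Fin (2*K+2)) := by
    apply Fin.ext; simpa using idx_val (K := K) (m := 2*K+1) (by omega)
  have hne : (⟨2*K+1, by omega⟩ : Fin (2*K+2)) ≠ (⟨2*K, by omega⟩ : Fin (2*K+2)) := by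
    intro he; rw [Fin.mk.injEq] at he; omega
  rw [Dj_succ, Dj_vanish K _ (by simp) t, e0, e1, Pi.single_eq_same, Pi.single_eq_of_ne hne]
  simp

lemma Dj_last (hK : 1 ≤ K) (t : Fin (2*K+2) → ℂ) :
    Dj K (K+1) ⟨2*K+1, Nat.lt_succ_self _⟩ t
      = Mn K K t * (Umat (t ⟨2*K, by omega⟩) * sigmaM) := by
  have e0 : idx K (2*K) = (⟨2*K, by omega⟩ : Fin (2*K+2)) := by
    apply Fin.ext; simpa using idx_val (K := K) (m := 2*K) (by omega)
  have e1 : idx K (2*K+1) = (⟨2*K+1, by omega⟩ : Fin (2*K+2)) := by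
    apply Fin.ext; simpa using idx_val (K := K) (m := 2*K+1) (by omega)
  have hne : (⟨2*K, by omega⟩ : Fin (2*K+2)) ≠ (⟨2*K+1, by omega⟩ : Fin (2*K+2)) := by
    intro he; rw [Fin.mk.injEq] at he; omega
  rw [Dj_succ, Dj_vanish K _ (by simp) t, e0, e1, Pi.single_eq_same,
    Pi.single_eq_of_ne hne]
  simp

lemma euler (n : ℕ) (hn : n ≤ K+1) (t : Fin (2*K+2) → ℂ) :
    (2:ℂ) • (∑ j : Fin (2*K+2), ((-1:ℂ)^(j:ℕ) * t j) • Dj K n j t)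
      = sigma3 * Mn K n t - Mn K n t * sigma3 := by
  induction n with
  | zero =>
    simp only [Dj_zero', smul_zero, Finset.sum_const_zero, smul_zero]
    rw [show Mn K 0 t = 1 from rfl]
    simp
  | succ n ih =>
    have hnK : n ≤ K := by omega
    have v0 : ((idx K (2*n) : Fin (2*K+2)) : ℕ) = 2*n := idx_val (by omega)
    have v1 : ((idx K (2*n+1) : Fin (2*K+2)) : ℕ) = 2*n+1 := idx_val (by omega)
    set X := sigmaP * Lmat (t (idx K (2*n+1))) with hX
    set Y := Umat (t (idx K (2*n))) * sigmaM with hY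
    have hW : ∀ j : Fin (2*K+2),
        ((-1:ℂ)^(j:ℕ) * t j) •
          (((Pi.single j 1 : Fin (2*K+2) → ℂ) (idx K (2*n))) • X
            + ((Pi.single j 1 : Fin (2*K+2) → ℂ) (idx K (2*n+1))) • Y)
        = (if idx K (2*n) = j then ((-1:ℂ)^(j:ℕ) * t j) • X else 0)
          + (if idx K (2*n+1) = j then ((-1:ℂ)^(j:ℕ) * t j) • Y else 0) := by
      intro j
      rw [Pi.single_apply, Pi.single_apply]
      split_ifs <;> simp
    have hsum : (∑ j : Fin (2*K+2), ((-1:ℂ)^(j:ℕ) * t j) • Dj K (n+1) j t)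
        = (∑ j : Fin (2*K+2), ((-1:ℂ)^(j:ℕ) * t j) • Dj K n j t) * ULf K n t
          + Mn K n t *
            ((t (idx K (2*n))) • X - (t (idx K (2*n+1))) • Y) := by
      calc (∑ j : Fin (2*K+2), ((-1:ℂ)^(j:ℕ) * t j) • Dj K (n+1) j t)
          = ∑ j : Fin (2*K+2),
              (((-1:ℂ)^(j:ℕ) * t j) • (Dj K n j t * ULf K n t)
                + Mn K n t * ((if idx K (2*n) = j then ((-1:ℂ)^(j:ℕ) * t j) • X else 0)
                  + (if idx K (2*n+1) = j then ((-1:ℂ)^(j:ℕ) * t j) • Y else 0))) := by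
            refine Finset.sum_congr rfl fun j _ => ?_
            rw [Dj_succ, smul_add, ← hX, ← hY, ← mul_smul_comm ((-1:ℂ)^((j:ℕ)) * t j) (Mn K n t), hW j]
        _ = (∑ j : Fin (2*K+2), ((-1:ℂ)^(j:ℕ) * t j) • Dj K n j t) * ULf K n t
            + Mn K n t * (∑ j : Fin (2*K+2),
                ((if idx K (2*n) = j then ((-1:ℂ)^(j:ℕ) * t j) • X else 0)
                  + (if idx K (2*n+1) = j then ((-1:ℂ)^(j:ℕ) * t j) • Y else 0))) := by
            rw [Finset.sum_add_distrib, Finset.sum_mul, ← Finset.mul_sum]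
            simp only [smul_mul_assoc]
        _ = (∑ j : Fin (2*K+2), ((-1:ℂ)^(j:ℕ) * t j) • Dj K n j t) * ULf K n t
            + Mn K n t * ((t (idx K (2*n))) • X - (t (idx K (2*n+1))) • Y) := by
            congr 1
            rw [Finset.sum_add_distrib, Finset.sum_ite_eq, Finset.sum_ite_eq]
            simp only [Finset.mem_univ, if_true, v0, v1]
            rw [show ((-1:ℂ))^(2*n) = 1 from (Even.neg_one_pow ⟨n, by ring⟩),
              show ((-1:ℂ))^(2*n+1) = -1 from (Odd.neg_one_pow ⟨n, by ring⟩)]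
            rw [one_mul, neg_one_mul, neg_smul, ← sub_eq_add_neg]
    rw [hsum, smul_add, ← smul_mul_assoc, ih (by omega)]
    have h2 : (2:ℂ) • ((t (idx K (2*n))) • X - (t (idx K (2*n+1))) • Y)
        = (2 * t (idx K (2*n))) • X - (2 * t (idx K (2*n+1))) • Y := by
      rw [smul_sub, smul_smul, smul_smul]
    rw [← mul_smul_comm, h2]
    have hkey := key2 (t (idx K (2*n+1))) (t (idx K (2*n)))
    rw [← hX, ← hY] at hkey
    have : Mn K n t * ((2 * t (idx K (2*n))) • X - (2 * t (idx K (2*n+1))) • Y)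
        = Mn K n t * (sigma3 * ULf K n t - ULf K n t * sigma3) := by
      rw [← hkey]; rfl
    rw [this, Mn_succ]
    noncomm_ring

lemma ofFn_Mn (s : Fin (2*K+2) → ℂ) :
    ∀ n, n ≤ K+1 →
      (List.ofFn fun i : Fin n =>
          Umat (s (idx K (2*(i:ℕ)))) * Lmat (s (idx K (2*(i:ℕ)+1)))).prod = Mn K n s := by
  intro n
  induction n with
  | zero => intro _; simp [show Mn K 0 s = 1 from rfl]
  | succ n ih =>
    intro hn
    rw [List.ofFn_succ', List.concat_eq_append, List.prod_append]
    simp only [List.prod_cons, List.prod_nil, mul_one]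
    rw [Mn_succ, ← ih (by omega)]
    congr 1

lemma Fmat_eq (s : Fin (2*K+2) → ℂ) (lam : ℂ) :
    Fmat K s lam = Mn K (K+1) s * Dm lam := by
  have hfn : (List.ofFn fun i : Fin (K+1) =>
      Umat (s ⟨2*(i:ℕ), by have := i.isLt; omega⟩) *
      Lmat (s ⟨2*(i:ℕ)+1, by have := i.isLt; omega⟩))
      = List.ofFn fun i : Fin (K+1) =>
          Umat (s (idx K (2*(i:ℕ)))) * Lmat (s (idx K (2*(i:ℕ)+1))) := by
    congr 1
    funext i
    have h1 : (⟨2*(i:ℕ), by have := i.isLt; omega⟩ : Fin (2*K+2)) = idx K (2*(i:ℕ)) := by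
      apply Fin.ext
      simp [idx_val (show 2*(i:ℕ) < 2*K+2 by have := i.isLt; omega)]
    have h2 : (⟨2*(i:ℕ)+1, by have := i.isLt; omega⟩ : Fin (2*K+2)) = idx K (2*(i:ℕ)+1) := by
      apply Fin.ext
      simp [idx_val (show 2*(i:ℕ)+1 < 2*K+2 by have := i.isLt; omega)]
    rw [h1, h2]
  rw [Fmat, hfn, ofFn_Mn s (K+1) le_rfl]
  rfl

def entL (lam : ℂ) (a b : Fin 2) : EE →ₗ[ℂ] ℂ where
  toFun A := (A * Dm lam) a b
  map_add' A B := by simp [Matrix.add_mul]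
  map_smul' c A := by simp [Matrix.smul_mul]

lemma fderiv_entry {f : (Fin (2*K+2) → ℂ) → EE} {t : Fin (2*K+2) → ℂ}
    (hf : DifferentiableAt ℂ f t) (lam : ℂ) (a b : Fin 2) (v : Fin (2*K+2) → ℂ) :
    fderiv ℂ (fun t => (f t * Dm lam) a b) t v = ((fderiv ℂ f t v) * Dm lam) a b := by
  have h := ((LinearMap.toContinuousLinearMap (entL lam a b)).hasFDerivAt.comp t
    hf.hasFDerivAt).fderiv
  have he : (fun t => (f t * Dm lam) a b)
      = (LinearMap.toContinuousLinearMap (entL lam a b)) ∘ f := rfl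
  rw [he, h]
  rfl

lemma lam_deriv (M : EE) (a b : Fin 2) (lam : ℂ) (hlam : lam ≠ 0) :
    lam * deriv (fun l => (M * Dm l) a b) lam = ((M * Dm lam) * sigma3) a b := by
  fin_cases b
  · show lam * deriv (fun l => (M * Dm l) a 0) lam = ((M * Dm lam) * sigma3) a 0
    have he : (fun l => (M * Dm l) a (0 : Fin 2)) = fun l => M a 0 * l := by
      funext l; simp [Matrix.mul_apply, Dm, Fin.sum_univ_two]
    rw [he, deriv_const_mul _ differentiableAt_fun_id, deriv_id'']
    simp [Matrix.mul_apply, Dm, sigma3, Fin.sum_univ_two]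
    ring
  · show lam * deriv (fun l => (M * Dm l) a 1) lam = ((M * Dm lam) * sigma3) a 1
    have he : (fun l => (M * Dm l) a (1 : Fin 2)) = fun l => M a 1 * l⁻¹ := by
      funext l; simp [Matrix.mul_apply, Dm, Fin.sum_univ_two]
    rw [he, deriv_const_mul _ (differentiableAt_inv hlam), deriv_inv]
    simp [Matrix.mul_apply, Dm, sigma3, Fin.sum_univ_two]
    field_simp

-- pS of the coordinate function t ↦ t c
lemma pS_coord (c j : Fin (2*K+2)) (s : Fin (2*K+2) → ℂ) (lam : ℂ) :
    pS K j (fun t _ => t c) s lam = if c = j then 1 else 0 := by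
  rw [pS]
  rw [show (fun t : Fin (2*K+2) → ℂ => t c)
      = fun t => (ContinuousLinearMap.proj c : (Fin (2*K+2) → ℂ) →L[ℂ] ℂ) t from rfl]
  rw [ContinuousLinearMap.fderiv]
  simp [Pi.single_apply]

lemma pL_coord (c : Fin (2*K+2)) (s : Fin (2*K+2) → ℂ) (lam : ℂ) :
    pL K (fun t _ => t c) s lam = 0 := by
  rw [pL]
  exact deriv_const lam (s c)

lemma pS_g (j : Fin (2*K+2)) (s : Fin (2*K+2) → ℂ) (lam : ℂ) (a b : Fin 2) :
    pS K j (fun t l => Fmat K t l a b) s lam = ((Dj K (K+1) j s) * Dm lam) a b := by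
  rw [pS]
  have hfe : (fun t => Fmat K t lam a b) = fun t => (Mn K (K+1) t * Dm lam) a b := by
    funext t; rw [Fmat_eq]
  rw [hfe, fderiv_entry (diff_Mn (K+1) s) lam a b]
  rfl

lemma pL_g (s : Fin (2*K+2) → ℂ) (lam : ℂ) (hlam : lam ≠ 0) (a b : Fin 2) :
    lam * pL K (fun t l => Fmat K t l a b) s lam = ((Fmat K s lam) * sigma3) a b := by
  rw [pL]
  have hfe : (fun l => Fmat K s l a b) = fun l => (Mn K (K+1) s * Dm l) a b := by
    funext l; rw [Fmat_eq]
  rw [hfe, lam_deriv _ a b lam hlam, ← Fmat_eq]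

set_option maxHeartbeats 2000000 in
lemma main_aux (K : ℕ) (hK : 1 ≤ K) (s : Fin (2*K+2) → ℂ) (lam : ℂ)
    (hlam : lam ≠ 0) (a b : Fin 2) (h : 2*K+1 < 2*K+2) :
    fnBr K (fun t _ => t ⟨2*K+1, h⟩) (fun t l => Fmat K t l a b) s lam
      = ((s ⟨2*K+1, h⟩ / 2) • (Fmat K s lam * sigma3 - sigma3 * Fmat K s lam)
          + (lam^2)⁻¹ • (sigmaP * Fmat K s lam - Fmat K s lam * sigmaP)) a b := by
  have h2K : 2*K < 2*K+2 := by omega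
  have h00 : 0 < 2*K+2 := by omega
  set jL : Fin (2*K+2) := ⟨2*K+1, h⟩ with hjLdef
  set j2K : Fin (2*K+2) := ⟨2*K, h2K⟩ with hj2Kdef
  set j0 : Fin (2*K+2) := ⟨0, h00⟩ with hj0def
  set g : (Fin (2*K+2) → ℂ) → ℂ → ℂ := fun t l => Fmat K t l a b with hgdef
  have hvL : (jL:ℕ) = 2*K+1 := rfl
  have hv2K : (j2K:ℕ) = 2*K := rfl
  have hv0 : (j0:ℕ) = 0 := rfl
  rw [fnBr]
  have hinner : ∀ j : Fin (2*K+2),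
      (∑ l : Fin (2*K+2), if (j:ℕ) < (l:ℕ) then
          cSS K j l s lam * (pS K j (fun t _ => t jL) s lam * pS K l g s lam
            - pS K l (fun t _ => t jL) s lam * pS K j g s lam) else 0)
      = (if (j:ℕ) < 2*K+1 then -(cSS K j jL s lam * pS K j g s lam) else 0) := by
    intro j
    refine (Finset.sum_eq_single jL ?_ ?_).trans ?_
    · intro l _ hl
      rw [pS_coord, pS_coord]
      by_cases hjl : (j:ℕ) < (l:ℕ)
      · have hne1 : ¬ (jL = l) := fun he => hl he.symm
        have hne2 : ¬ (jL = j) := by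
          intro he
          rw [← he] at hjl
          rw [hvL] at hjl
          have := l.isLt
          omega
        rw [if_pos hjl, if_neg hne1, if_neg hne2]
        ring
      · rw [if_neg hjl]
    · intro hmem; exact absurd (Finset.mem_univ jL) hmem
    · rw [pS_coord, pS_coord, if_pos rfl]
      by_cases hj : (j:ℕ) < 2*K+1
      · have hne : ¬ (jL = j) := by
          intro he
          rw [← he] at hj
          rw [hvL] at hj
          omega
        rw [if_pos (show (j:ℕ) < (jL:ℕ) by rw [hvL]; exact hj), if_pos hj, if_neg hne]
        ring
      · rw [if_neg (show ¬ (j:ℕ) < (jL:ℕ) by rw [hvL]; exact hj), if_neg hj]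
  rw [Finset.sum_congr rfl (fun j _ => hinner j)]
  have hsecond : (∑ j : Fin (2*K+2), cSL K j s lam *
      (pS K j (fun t _ => t jL) s lam * pL K g s lam
        - pL K (fun t _ => t jL) s lam * pS K j g s lam))
      = s jL * (lam * pL K g s lam) := by
    refine (Finset.sum_eq_single jL ?_ ?_).trans ?_
    · intro l _ hl
      rw [pS_coord, if_neg (fun he : jL = l => hl he.symm), pL_coord]
      ring
    · intro hmem; exact absurd (Finset.mem_univ jL) hmem
    · rw [pS_coord, if_pos rfl, pL_coord, cSL]
      have hp : (-1:ℂ)^((jL:ℕ)+1) = 1 := by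
        rw [hvL]
        exact Even.neg_one_pow ⟨K+1, by ring⟩
      rw [hp]
      ring
  rw [hsecond]
  have hterm : ∀ j : Fin (2*K+2),
      (if (j:ℕ) < 2*K+1 then -(cSS K j jL s lam * pS K j g s lam) else 0)
      = -(if j = j2K then pS K j g s lam else 0)
        + (if j = j0 then (lam^2)⁻¹ * pS K j g s lam else 0)
        + (-(s jL * ((-1:ℂ)^(j:ℕ) * s j * pS K j g s lam))
            + (if j = jL then s jL * ((-1:ℂ)^(j:ℕ) * s j * pS K j g s lam) else 0)) := by
    intro j
    have hjlt := j.isLt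
    by_cases hj : (j:ℕ) < 2*K+1
    · have hneL : ¬ (j = jL) := by
        intro he
        rw [he, hvL] at hj
        omega
      rw [if_pos hj, if_neg hneL, cSS]
      have hpow : (-1:ℂ)^((j:ℕ)+(jL:ℕ)+1) = (-1:ℂ)^(j:ℕ) := by
        rw [hvL, show (j:ℕ)+(2*K+1)+1 = (j:ℕ)+2*(K+1) by ring, pow_add,
          show ((-1:ℂ))^(2*(K+1)) = 1 from Even.neg_one_pow ⟨K+1, by ring⟩, mul_one]
      rw [hpow, hvL]
      have c1 : ((j:ℕ)+1 = 2*K+1) ↔ (j = j2K) := by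
        constructor
        · intro hh; exact Fin.ext (by rw [hv2K]; omega)
        · intro hh; rw [hh, hv2K]
      have c2 : (((j:ℕ) = 0) ∧ (2*K+1 = 2*K+1)) ↔ (j = j0) := by
        constructor
        · rintro ⟨hh, -⟩; exact Fin.ext (by rw [hv0]; omega)
        · intro hh; exact ⟨by rw [hh, hv0], rfl⟩
      rw [if_congr c1 rfl rfl, if_congr c2 rfl rfl]
      by_cases h2 : j = j2K <;> by_cases hz : j = j0
      · exfalso
        rw [h2] at hz
        have := congrArg Fin.val hz
        rw [hv2K, hv0] at this
        omega
      · simp only [if_pos h2, if_neg hz]; ring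
      · simp only [if_neg h2, if_pos hz]; ring
      · simp only [if_neg h2, if_neg hz]; ring
    · have hje : j = jL := Fin.ext (by rw [hvL]; omega)
      have hne2 : ¬ (j = j2K) := by
        intro he
        have := congrArg Fin.val (he.symm.trans hje)
        rw [hv2K, hvL] at this
        omega
      have hne0 : ¬ (j = j0) := by
        intro he
        have := congrArg Fin.val (he.symm.trans hje)
        rw [hv0, hvL] at this
        omega
      simp only [if_neg hj, if_neg hne2, if_neg hne0, if_pos hje]
      ring
  rw [Finset.sum_congr rfl (fun j _ => hterm j)]
  rw [Finset.sum_add_distrib, Finset.sum_add_distrib, Finset.sum_add_distrib]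
  rw [Finset.sum_neg_distrib, Finset.sum_neg_distrib,
    Finset.sum_ite_eq' Finset.univ j2K (fun j => pS K j g s lam),
    Finset.sum_ite_eq' Finset.univ j0 (fun j => (lam^2)⁻¹ * pS K j g s lam),
    Finset.sum_ite_eq' Finset.univ jL
      (fun j => s jL * ((-1:ℂ)^(j:ℕ) * s j * pS K j g s lam)),
    ← Finset.mul_sum]
  simp only [Finset.mem_univ, if_true]
  set T := ∑ i : Fin (2*K+2), (-1:ℂ)^(i:ℕ) * s i * pS K i g s lam with hTdef
  have hT2 : 2 * T = ((sigma3 * Mn K (K+1) s - Mn K (K+1) s * sigma3) * Dm lam) a b := by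
    have heu := congrArg (fun M : EE => (M * Dm lam) a b) (euler (K+1) (le_refl (K+1)) s)
    simp only [smul_mul_assoc, Finset.sum_mul, Matrix.sum_apply, Matrix.smul_apply,
      smul_eq_mul] at heu
    have hTsum : T = ∑ i : Fin (2*K+2),
        ((-1:ℂ)^(i:ℕ) * s i) * ((Dj K (K+1) i s * Dm lam) a b) := by
      rw [hTdef]
      exact Finset.sum_congr rfl (fun i _ => by rw [pS_g])
    rw [hTsum]
    exact heu
  have hT : T = (((sigma3 * Mn K (K+1) s - Mn K (K+1) s * sigma3) * Dm lam) a b) / 2 := by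
    linear_combination hT2 / 2
  have hP2K : pS K j2K g s lam = ((Mn K K s * (sigmaP * Lmat (s jL))) * Dm lam) a b := by
    rw [pS_g, Dj_2K hK s]
  have hP0 : pS K j0 g s lam = ((sigmaP * Mn K (K+1) s) * Dm lam) a b := by
    rw [pS_g, Dj_zeroCoord (K+1) (by omega) (le_refl (K+1)) s]
  have hPL : pS K jL g s lam = ((Mn K K s * (Umat (s j2K) * sigmaM)) * Dm lam) a b := by
    rw [pS_g, Dj_last hK s]
  have hpLg : lam * pL K g s lam = (Fmat K s lam * sigma3) a b := pL_g s lam hlam a b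
  have hMsplit : Mn K (K+1) s = Mn K K s * (Umat (s j2K) * Lmat (s jL)) := by
    rw [Mn_succ, ULf]
    have e0 : idx K (2*K) = j2K := by
      apply Fin.ext
      rw [idx_val (show 2*K < 2*K+2 by omega), hv2K]
    have e1 : idx K (2*K+1) = jL := by
      apply Fin.ext
      rw [idx_val (show 2*K+1 < 2*K+2 by omega), hvL]
    rw [e0, e1]
  have hFm : Fmat K s lam = Mn K (K+1) s * Dm lam := Fmat_eq s lam
  rw [show ((-1:ℂ))^(2*K+1) = -1 from Odd.neg_one_pow ⟨K, rfl⟩]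
  rw [hT, hP2K, hP0, hPL, hpLg, hFm, hMsplit]
  clear hT hT2 hP2K hP0 hPL hpLg hMsplit hFm hTdef hterm hinner hsecond
  clear_value T g
  clear hgdef T g
  set P := Mn K K s with hPdef
  clear_value P
  fin_cases a <;> fin_cases b
  all_goals simp only [Matrix.mul_apply, Matrix.smul_apply, Matrix.sub_apply, Matrix.add_apply,
      Fin.sum_univ_two, Umat, Lmat, Dm, sigma3, sigmaP, sigmaM, smul_eq_mul,
      Matrix.cons_val_zero, Matrix.cons_val_one, Matrix.head_cons, Matrix.head_fin_const,
      Matrix.cons_val', Matrix.empty_val', Fin.zero_eta, Fin.mk_one, Matrix.of_apply]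
  all_goals try field_simp
  all_goals try simp only [inv_pow]
  all_goals try field_simp
  all_goals try ring
  all_goals try (simp only [inv_pow]; field_simp; ring)

/-- `{s_{2K+2}, F}_{FN} = (s_{2K+2}/2)[F, σ3] + λ^{−2}[σ₊, F]`, entrywise,
identically on `ℂ^{2K+2} × ℂ*`. -/
theorem fn_bracket_sLast_F (K : ℕ) (hK : 1 ≤ K) (s : Fin (2*K+2) → ℂ) (lam : ℂ)
    (hlam : lam ≠ 0) (a b : Fin 2) :
    fnBr K (fun t _ => t ⟨2*K+1, by omega⟩) (fun t l => Fmat K t l a b) s lam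
      = ((s ⟨2*K+1, by omega⟩ / 2) • (Fmat K s lam * sigma3 - sigma3 * Fmat K s lam)
          + (lam^2)⁻¹ • (sigmaP * Fmat K s lam - Fmat K s lam * sigmaP)) a b :=
  main_aux K hK s lam hlam a b (by omega)
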